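/- Assume 2^{ℵ0} < 2^{ℵ1}. Let P ⊆ (ω^ω, ≤*) be closed under pointwise maximum with cofinality ℵ1, containing an ω1-chain C unbounded in P, and let G be a nontrivial abelian group. Then there exists a coherent family Φ = ⟨φ_f : I_f → G | f ∈ P⟩ whose restriction to C is nontrivial, i.e., no ψ : ω × ω → G satisfies ψ ↾ I_f =* φ_f for all f ∈ C. -/

import Mathlib

open Cardinal

/-- `f ≤* g`: eventual domination. -/
def leStar (f g : ℕ → ℕ) : Prop := {i : ℕ | ¬ f i ≤ g i}.Finite

/-- `I_f = {(i,j) : j ≤ f(i)}`. -/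
def Ifun (f : ℕ → ℕ) : Set (ℕ × ℕ) := {p : ℕ × ℕ | p.2 ≤ f p.1}

namespace Stmt8
open Order Set
open scoped Classical

noncomputable section
universe u

abbrev w1 : Ordinal.{u} := (aleph 1 : Cardinal.{u}).ord

/-! ### basic leStar / Ifun lemmas -/

theorem leStar_refl (f : ℕ → ℕ) : leStar f f := by simp [leStar]

theorem leStar_of_le {f g : ℕ → ℕ} (h : ∀ i, f i ≤ g i) : leStar f g := by
  simp only [leStar]
  convert Set.finite_empty
  ext i; simp [h i]

theorem leStar_trans {f g h : ℕ → ℕ} (h1 : leStar f g) (h2 : leStar g h) : leStar f h := by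
  apply Set.Finite.subset (h1.union h2)
  intro i hi
  simp only [Set.mem_setOf_eq, Set.mem_union] at *
  by_contra hc
  push_neg at hc
  exact hi (le_trans hc.1 hc.2)

theorem leStar_mono {f g h : ℕ → ℕ} (h1 : leStar f g) (h2 : ∀ i, g i ≤ h i) : leStar f h :=
  leStar_trans h1 (leStar_of_le h2)

theorem Ifun_diff_finite {f g : ℕ → ℕ} (h : leStar f g) : (Ifun f \ Ifun g).Finite := by
  have hsub : Ifun f \ Ifun g ⊆ ⋃ i ∈ {i : ℕ | ¬ f i ≤ g i}, ({i} ×ˢ Set.Iic (f i)) := by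
    rintro ⟨i, j⟩ ⟨h1, h2⟩
    simp only [Ifun, Set.mem_setOf_eq] at h1 h2
    simp only [Set.mem_iUnion, Set.mem_prod, Set.mem_singleton_iff, Set.mem_Iic, Set.mem_setOf_eq]
    exact ⟨i, fun hle => h2 (le_trans h1 hle), rfl, h1⟩
  exact Set.Finite.subset
    (Set.Finite.biUnion h (fun i _ => (Set.finite_singleton i).prod (Set.finite_Iic _))) hsub

/-- transitivity of agreement-mod-finite on a set -/
theorem sep_ne_trans {α β : Type*} (A : Set α) (u v w : α → β)
    (h1 : {p ∈ A | u p ≠ v p}.Finite) (h2 : {p ∈ A | v p ≠ w p}.Finite) :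
    {p ∈ A | u p ≠ w p}.Finite := by
  apply Set.Finite.subset (h1.union h2)
  intro p hp
  obtain ⟨hA, hne⟩ := hp
  by_cases h : u p = v p
  · exact Or.inr ⟨hA, fun hvw => hne (h.trans hvw)⟩
  · exact Or.inl ⟨hA, h⟩

/-! ### countable enumerations of initial segments -/

def wfun (ξ : Ordinal.{u}) : ℕ → Ordinal.{u} :=
  if h : ∃ w : ℕ → Ordinal, (∀ n, w n ≤ ξ) ∧ (∀ η ≤ ξ, ∃ n, w n = η) then h.choose
  else fun _ => 0

theorem wfun_le (ξ : Ordinal.{u}) (n : ℕ) : wfun ξ n ≤ ξ := by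
  rw [wfun]
  split
  · next h => exact h.choose_spec.1 n
  · exact (zero_le : (0 : Ordinal) ≤ ξ)

theorem exists_enum_Iic {ξ : Ordinal.{u}} (h : ξ < w1) :
    ∃ w : ℕ → Ordinal, (∀ n, w n ≤ ξ) ∧ (∀ η ≤ ξ, ∃ n, w n = η) := by
  have hc : (Set.Iic ξ).Countable := by
    rw [countable_iff_lt_aleph_one, ← Order.Iio_succ, Ordinal.mk_Iio_ordinal]
    have h2 : (succ ξ).card < aleph 1 :=
      Cardinal.lt_ord.mp ((Cardinal.isSuccLimit_ord (le_of_lt aleph0_lt_aleph_one)).succ_lt h)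
    have h3 : (aleph 1 : Cardinal.{u+1}) = Cardinal.lift.{u+1,u} (aleph 1) := by
      rw [Cardinal.lift_aleph]; norm_num
    rw [h3, Cardinal.lift_lt]; exact h2
  obtain ⟨w, hw⟩ := hc.exists_surjective ⟨ξ, Set.mem_Iic.mpr le_rfl⟩
  exact ⟨fun n => (w n).1, fun n => Set.mem_Iic.mp (w n).2, fun η hη => by
    obtain ⟨n, hn⟩ := hw ⟨η, Set.mem_Iic.mpr hη⟩; exact ⟨n, congrArg Subtype.val hn⟩⟩

theorem wfun_surj {ξ : Ordinal.{u}} (h : ξ < w1) : ∀ η ≤ ξ, ∃ n, wfun ξ n = η := by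
  rw [wfun, dif_pos (exists_enum_Iic h)]
  exact (exists_enum_Iic h).choose_spec.2

/-! ### the chain elements -/

def eAux (Dfun : Ordinal.{u} → ℕ → ℕ) (cfun : Ordinal.{u} → ℕ → ℕ) (ξ : Ordinal.{u}) (n : ℕ) :
    ℕ → ℕ :=
  if n % 2 = 0 then Dfun (wfun ξ (n / 2))
  else (if wfun ξ (n / 2) < ξ then cfun (wfun ξ (n / 2)) else Dfun 0)

def FSAux (Dfun : Ordinal.{u} → ℕ → ℕ) (cfun : Ordinal.{u} → ℕ → ℕ) (ξ : Ordinal.{u}) :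
    ℕ → ℕ → ℕ
  | 0 => eAux Dfun cfun ξ 0
  | n + 1 => FSAux Dfun cfun ξ n ⊔ eAux Dfun cfun ξ (n + 1)

def cF (C : Set (ℕ → ℕ)) (Dfun : Ordinal.{u} → ℕ → ℕ) : Ordinal.{u} → ℕ → ℕ :=
  Ordinal.lt_wf.fix (fun ξ ih =>
    if h : ∃ x, x ∈ C ∧ ∀ n,
        ¬ leStar x (FSAux Dfun (fun η => if hh : η < ξ then ih η hh else 0) ξ n) then
      h.choose
    else 0)

def FS (C : Set (ℕ → ℕ)) (Dfun : Ordinal.{u} → ℕ → ℕ) (ξ : Ordinal.{u}) : ℕ → ℕ → ℕ :=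
  FSAux Dfun (fun η => if η < ξ then cF C Dfun η else 0) ξ

theorem cF_eq (C : Set (ℕ → ℕ)) (Dfun : Ordinal.{u} → ℕ → ℕ) (ξ : Ordinal.{u}) :
    cF C Dfun ξ =
      if h : ∃ x, x ∈ C ∧ ∀ n, ¬ leStar x (FS C Dfun ξ n) then h.choose else 0 := by
  rw [cF, WellFounded.fix_eq]
  rfl

def dd (C : Set (ℕ → ℕ)) (Dfun : Ordinal.{u} → ℕ → ℕ) (ξ : Ordinal.{u}) : ℕ → ℕ :=
  if h : ∃ ζ, ξ = succ ζ then cF C Dfun h.choose ⊔ Dfun h.choose else Dfun ξ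

theorem dd_succ (C : Set (ℕ → ℕ)) (Dfun : Ordinal.{u} → ℕ → ℕ) (ζ : Ordinal.{u}) :
    dd C Dfun (succ ζ) = cF C Dfun ζ ⊔ Dfun ζ := by
  have h : ∃ ζ' : Ordinal.{u}, succ ζ = succ ζ' := ⟨ζ, rfl⟩
  rw [dd, dif_pos h]
  have : h.choose = ζ := succ_injective h.choose_spec.symm
  rw [this]

theorem dd_of_not_succ (C : Set (ℕ → ℕ)) (Dfun : Ordinal.{u} → ℕ → ℕ) {ξ : Ordinal.{u}}
    (h : ¬ ∃ ζ, ξ = succ ζ) : dd C Dfun ξ = Dfun ξ := by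
  rw [dd, dif_neg h]

def maxdd (C : Set (ℕ → ℕ)) (Dfun : Ordinal.{u} → ℕ → ℕ) (ξ : Ordinal.{u}) : ℕ → ℕ → ℕ
  | 0 => dd C Dfun (wfun ξ 0)
  | m + 1 => maxdd C Dfun ξ m ⊔ dd C Dfun (wfun ξ (m + 1))

def idx (C : Set (ℕ → ℕ)) (Dfun : Ordinal.{u} → ℕ → ℕ) (ξ : Ordinal.{u}) : ℕ → ℕ
  | 0 => if h : ∃ i, maxdd C Dfun ξ 0 i < cF C Dfun ξ i then Nat.find h else 0
  | n + 1 =>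
      if h : ∃ i, idx C Dfun ξ n < i ∧ maxdd C Dfun ξ (n + 1) i < cF C Dfun ξ i then Nat.find h
      else 0

def SS (C : Set (ℕ → ℕ)) (Dfun : Ordinal.{u} → ℕ → ℕ) (ξ : Ordinal.{u}) : Set (ℕ × ℕ) :=
  Set.range fun n => (idx C Dfun ξ n, cF C Dfun ξ (idx C Dfun ξ n))

def rk (C : Set (ℕ → ℕ)) (Dfun : Ordinal.{u} → ℕ → ℕ) (f : ℕ → ℕ) : Ordinal.{u} :=
  sInf {ξ | leStar f (dd C Dfun ξ)}

/-! ### the branching recursion -/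

def ladder (l : Ordinal.{u}) : ℕ → Ordinal.{u} :=
  if h : ∃ s : ℕ → Ordinal, (∀ n, s n < l) ∧ (∀ η < l, ∃ n, s n = η) then h.choose
  else fun _ => 0

theorem ladder_lt {l : Ordinal.{u}} (hl : IsSuccLimit l) (n : ℕ) : ladder l n < l := by
  rw [ladder]
  split
  · next h => exact h.choose_spec.1 n
  · exact hl.pos

theorem exists_ladder {l : Ordinal.{u}} (hl : IsSuccLimit l) (h : l < w1) :
    ∃ s : ℕ → Ordinal, (∀ n, s n < l) ∧ (∀ η < l, ∃ n, s n = η) := by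
  have hc : (Set.Iio l).Countable := by
    rw [countable_iff_lt_aleph_one, Ordinal.mk_Iio_ordinal]
    have h2 : l.card < aleph 1 := Cardinal.lt_ord.mp h
    have h3 : (aleph 1 : Cardinal.{u+1}) = Cardinal.lift.{u+1,u} (aleph 1) := by
      rw [Cardinal.lift_aleph]; norm_num
    rw [h3, Cardinal.lift_lt]; exact h2
  obtain ⟨w, hw⟩ := hc.exists_surjective ⟨0, Set.mem_Iio.mpr hl.pos⟩
  exact ⟨fun n => (w n).1, fun n => Set.mem_Iio.mp (w n).2, fun η hη => by
    obtain ⟨n, hn⟩ := hw ⟨η, Set.mem_Iio.mpr hη⟩; exact ⟨n, congrArg Subtype.val hn⟩⟩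

theorem ladder_surj {l : Ordinal.{u}} (hl : IsSuccLimit l) (h : l < w1) :
    ∀ η < l, ∃ n, ladder l n = η := by
  rw [ladder, dif_pos (exists_ladder hl h)]
  exact (exists_ladder hl h).choose_spec.2

def maxO (s : ℕ → Ordinal.{u}) : ℕ → Ordinal.{u}
  | 0 => s 0
  | n + 1 => max (maxO s n) (s (n + 1))

theorem maxO_lt {s : ℕ → Ordinal.{u}} {l : Ordinal.{u}} (h : ∀ n, s n < l) (n : ℕ) :
    maxO s n < l := by
  induction n with
  | zero => exact h 0
  | succ n ih => exact max_lt ih (h (n + 1))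

theorem le_maxO {s : ℕ → Ordinal.{u}} {j n : ℕ} (h : j ≤ n) : s j ≤ maxO s n := by
  induction n with
  | zero => rw [Nat.le_zero.mp h]; exact le_rfl
  | succ n ih =>
    rcases Nat.le_succ_iff.mp h with h' | h'
    · exact le_trans (ih h') (le_max_left _ _)
    · rw [h']; exact le_max_right _ _

theorem maxO_mono {s : ℕ → Ordinal.{u}} {k m : ℕ} (h : k ≤ m) : maxO s k ≤ maxO s m := by
  induction m with
  | zero => rw [Nat.le_zero.mp h]
  | succ m ihm =>
    rcases Nat.le_succ_iff.mp h with h' | h'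
    · exact le_trans (ihm h') (le_max_left _ _)
    · subst h'; exact le_rfl

theorem infinite_gt {s : Set ℕ} (hs : s.Infinite) (b : ℕ) : ∃ i ∈ s, b < i := by
  by_contra h
  push_neg at h
  exact hs (Set.Finite.subset (Set.finite_Iic b) h)

def nsel (C : Set (ℕ → ℕ)) (Dfun : Ordinal.{u} → ℕ → ℕ) (s : ℕ → Ordinal.{u}) (p : ℕ × ℕ) : ℕ :=
  if h : ∃ n, p ∈ Ifun (dd C Dfun (s n)) then Nat.find h else 0

def FF {G : Type*} [AddCommGroup G] (e : G) (C : Set (ℕ → ℕ)) (Dfun : Ordinal.{u} → ℕ → ℕ)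
    (ε : Ordinal.{u} → Bool) : Ordinal.{u} → ℕ × ℕ → G := fun o =>
  Ordinal.limitRecOn o (fun _ => 0)
    (fun ζ prev => fun p => prev p + if ε ζ = true ∧ p ∈ SS C Dfun ζ then e else 0)
    (fun l hl ih => fun p =>
      ih (maxO (ladder l) (nsel C Dfun (ladder l) p)) (maxO_lt (ladder_lt hl) _) p)

theorem FF_zero {G : Type*} [AddCommGroup G] (e : G) (C : Set (ℕ → ℕ))
    (Dfun : Ordinal.{u} → ℕ → ℕ) (ε : Ordinal.{u} → Bool) :
    FF e C Dfun ε 0 = fun _ => 0 := by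
  rw [FF, Ordinal.limitRecOn_zero]

theorem FF_succ {G : Type*} [AddCommGroup G] (e : G) (C : Set (ℕ → ℕ))
    (Dfun : Ordinal.{u} → ℕ → ℕ) (ε : Ordinal.{u} → Bool) (ζ : Ordinal.{u}) :
    FF e C Dfun ε (succ ζ) = fun p =>
      FF e C Dfun ε ζ p + if ε ζ = true ∧ p ∈ SS C Dfun ζ then e else 0 := by
  rw [FF, Ordinal.limitRecOn_succ]; rfl

theorem FF_succ_apply {G : Type*} [AddCommGroup G] (e : G) (C : Set (ℕ → ℕ))
    (Dfun : Ordinal.{u} → ℕ → ℕ) (ε : Ordinal.{u} → Bool) (ζ : Ordinal.{u}) (p : ℕ × ℕ) :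
    FF e C Dfun ε (succ ζ) p =
      FF e C Dfun ε ζ p + (if ε ζ = true ∧ p ∈ SS C Dfun ζ then e else 0) := by
  rw [FF_succ]

theorem FF_limit {G : Type*} [AddCommGroup G] (e : G) (C : Set (ℕ → ℕ))
    (Dfun : Ordinal.{u} → ℕ → ℕ) (ε : Ordinal.{u} → Bool) {l : Ordinal.{u}} (hl : IsSuccLimit l) :
    FF e C Dfun ε l = fun p =>
      FF e C Dfun ε (maxO (ladder l) (nsel C Dfun (ladder l) p)) p := by
  rw [FF, Ordinal.limitRecOn_limit _ _ _ _ hl]; rfl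


/-! ### prefix determinism and values of FF -/

theorem FF_prefix {G : Type*} [AddCommGroup G] (e : G) (C : Set (ℕ → ℕ))
    (Dfun : Ordinal.{u} → ℕ → ℕ) :
    ∀ ξ : Ordinal.{u}, ∀ ε ε' : Ordinal.{u} → Bool, (∀ ζ < ξ, ε ζ = ε' ζ) →
      FF e C Dfun ε ξ = FF e C Dfun ε' ξ := by
  intro ξ
  induction ξ using Ordinal.induction with
  | h ξ ih =>
    rcases Ordinal.zero_or_succ_or_isSuccLimit ξ with h0 | ⟨a, ha⟩ | hl
    · subst h0; intro ε ε' _; rw [FF_zero, FF_zero]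
    · subst ha
      intro ε ε' hεε
      rw [FF_succ, FF_succ]
      funext p
      rw [ih a (lt_succ a) ε ε' (fun ζ hζ => hεε ζ (hζ.trans (lt_succ a))),
        hεε a (lt_succ a)]
    · intro ε ε' hεε
      rw [FF_limit e C Dfun ε hl, FF_limit e C Dfun ε' hl]
      funext p
      exact congrFun (ih _ (maxO_lt (ladder_lt hl) _) ε ε'
        (fun ζ hζ => hεε ζ (hζ.trans (maxO_lt (ladder_lt hl) _)))) p

theorem FF_mem {G : Type*} [AddCommGroup G] (e : G) (C : Set (ℕ → ℕ))
    (Dfun : Ordinal.{u} → ℕ → ℕ) (ε : Ordinal.{u} → Bool) :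
    ∀ ξ : Ordinal.{u}, ∀ p, FF e C Dfun ε ξ p ∈ AddSubgroup.zmultiples e := by
  intro ξ
  induction ξ using Ordinal.induction with
  | h ξ ih =>
    rcases Ordinal.zero_or_succ_or_isSuccLimit ξ with h0 | ⟨a, ha⟩ | hl
    · subst h0; intro p; rw [FF_zero]; exact zero_mem _
    · subst ha
      intro p
      rw [FF_succ]
      apply add_mem (ih a (lt_succ a) p)
      split
      · exact AddSubgroup.mem_zmultiples e
      · exact zero_mem _
    · intro p
      rw [FF_limit e C Dfun ε hl]
      exact ih _ (maxO_lt (ladder_lt hl) _) p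

/-! ### properties of the construction, under the structural hypotheses -/

section Props

variable {C P : Set (ℕ → ℕ)} {Dfun : Ordinal.{u} → ℕ → ℕ}
  (hCP : C ⊆ P)
  (hmax : ∀ f ∈ P, ∀ g ∈ P, f ⊔ g ∈ P)
  (hDP : ∀ ξ : Ordinal.{u}, ξ < w1 → Dfun ξ ∈ P)
  (hP1 : ∀ t : ℕ → ℕ → ℕ, (∀ n, t n ∈ P) → ∃ x, x ∈ C ∧ ∀ n, ¬ leStar x (t n))

include hCP hmax hDP hP1 in
theorem cF_spec : ∀ ξ : Ordinal.{u}, ξ < w1 →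
    cF C Dfun ξ ∈ C ∧ ∀ n, ¬ leStar (cF C Dfun ξ) (FS C Dfun ξ n) := by
  intro ξ
  induction ξ using Ordinal.induction with
  | h ξ ih =>
    intro hξ
    have heP : ∀ n, eAux Dfun (fun η => if η < ξ then cF C Dfun η else 0) ξ n ∈ P := by
      intro n
      rw [eAux]
      split
      · exact hDP _ (lt_of_le_of_lt (wfun_le ξ _) hξ)
      · split
        · next h => exact hCP (ih _ h (h.trans hξ)).1
        · exact hDP 0 (lt_of_le_of_lt (zero_le : (0 : Ordinal) ≤ ξ) hξ)
    have hFSP : ∀ n, FS C Dfun ξ n ∈ P := by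
      intro n
      induction n with
      | zero => exact heP 0
      | succ n ihn => exact hmax _ ihn _ (heP (n + 1))
    have hex : ∃ x, x ∈ C ∧ ∀ n, ¬ leStar x (FS C Dfun ξ n) := hP1 _ hFSP
    rw [cF_eq, dif_pos hex]
    exact hex.choose_spec

include hCP hmax hDP hP1 in
theorem dd_mem : ∀ ξ : Ordinal.{u}, ξ < w1 → dd C Dfun ξ ∈ P := by
  intro ξ hξ
  rw [dd]
  split
  · next h =>
    rw [h.choose_spec] at hξ
    have hlt : h.choose < w1 := (lt_succ _).trans hξ
    exact hmax _ (hCP (cF_spec hCP hmax hDP hP1 _ hlt).1) _ (hDP _ hlt)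
  · exact hDP ξ hξ


theorem eAux_le_FS {cfun : Ordinal.{u} → ℕ → ℕ} {ξ : Ordinal.{u}} {j n : ℕ} (h : j ≤ n) :
    ∀ i, eAux Dfun cfun ξ j i ≤ FSAux Dfun cfun ξ n i := by
  induction n with
  | zero => rw [Nat.le_zero.mp h]; exact fun i => le_rfl
  | succ n ihn =>
    rcases Nat.le_succ_iff.mp h with h' | h'
    · exact fun i => le_trans (ihn h' i) (le_sup_left (a := FSAux Dfun cfun ξ n)
        (b := eAux Dfun cfun ξ (n+1)) i)
    · subst h'; exact fun i => le_sup_right (a := FSAux Dfun cfun ξ n)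
        (b := eAux Dfun cfun ξ (n+1)) i

theorem FS_le_FS {ξ : Ordinal.{u}} {m n : ℕ} (h : m ≤ n) :
    ∀ i, FS C Dfun ξ m i ≤ FS C Dfun ξ n i := by
  induction n with
  | zero => rw [Nat.le_zero.mp h]; exact fun i => le_rfl
  | succ n ihn =>
    rcases Nat.le_succ_iff.mp h with h' | h'
    · exact fun i => le_trans (ihn h' i) (le_sup_left (α := ℕ → ℕ)
        (a := FS C Dfun ξ n) (b := eAux Dfun _ ξ (n+1)) i)
    · subst h'; exact fun i => le_rfl

theorem dd_le_FS {η ξ : Ordinal.{u}} (hηξ : η ≤ ξ) (hξ : ξ < w1) :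
    ∃ N, ∀ i, dd C Dfun η i ≤ FS C Dfun ξ N i := by
  rw [dd]
  split
  · next h =>
    set ζ := h.choose with hζdef
    have hζ : η = succ ζ := h.choose_spec
    have hζlt : ζ < ξ := lt_of_lt_of_le (hζ ▸ lt_succ ζ) hηξ
    obtain ⟨k1, hk1⟩ := wfun_surj hξ ζ (le_of_lt hζlt)
    obtain ⟨k2, hk2⟩ := wfun_surj hξ ζ (le_of_lt hζlt)
    have h1 : eAux Dfun (fun η => if η < ξ then cF C Dfun η else 0) ξ (2 * k1 + 1) =
        cF C Dfun ζ := by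
      rw [eAux, if_neg (by omega)]
      have hdiv : (2 * k1 + 1) / 2 = k1 := by omega
      rw [hdiv, hk1]; simp [hζlt]
    have h2 : eAux Dfun (fun η => if η < ξ then cF C Dfun η else 0) ξ (2 * k2) = Dfun ζ := by
      rw [eAux, if_pos (by omega)]
      have hdiv : (2 * k2) / 2 = k2 := by omega
      rw [hdiv, hk2]
    refine ⟨max (2 * k1 + 1) (2 * k2), fun i => ?_⟩
    rw [Pi.sup_apply]
    refine max_le ?_ ?_
    · calc cF C Dfun ζ i = eAux Dfun (fun η => if η < ξ then cF C Dfun η else 0) ξ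
            (2 * k1 + 1) i := by rw [h1]
        _ ≤ FS C Dfun ξ (max (2 * k1 + 1) (2 * k2)) i := eAux_le_FS (le_max_left _ _) i
    · calc Dfun ζ i = eAux Dfun (fun η => if η < ξ then cF C Dfun η else 0) ξ (2 * k2) i := by
            rw [h2]
        _ ≤ FS C Dfun ξ (max (2 * k1 + 1) (2 * k2)) i := eAux_le_FS (le_max_right _ _) i
  · next h =>
    obtain ⟨k, hk⟩ := wfun_surj hξ η hηξ
    refine ⟨2 * k, fun i => ?_⟩
    have he : eAux Dfun (fun η => if η < ξ then cF C Dfun η else 0) ξ (2 * k) = Dfun η := by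
      rw [eAux, if_pos (by omega), Nat.mul_div_cancel_left k (by norm_num), hk]
    calc Dfun η i = eAux Dfun _ ξ (2 * k) i := by rw [he]
      _ ≤ FS C Dfun ξ (2 * k) i := eAux_le_FS le_rfl i

theorem dd_wfun_le_maxdd {ξ : Ordinal.{u}} {j m : ℕ} (h : j ≤ m) :
    ∀ i, dd C Dfun (wfun ξ j) i ≤ maxdd C Dfun ξ m i := by
  induction m with
  | zero => rw [Nat.le_zero.mp h]; exact fun i => le_rfl
  | succ m ihm =>
    rcases Nat.le_succ_iff.mp h with h' | h'
    · exact fun i => le_trans (ihm h' i) (by rw [maxdd, Pi.sup_apply]; exact le_max_left _ _)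
    · subst h'; exact fun i => by rw [maxdd, Pi.sup_apply]; exact le_max_right _ _

include hCP hmax hDP hP1 in
theorem maxdd_le_FS {ξ : Ordinal.{u}} (hξ : ξ < w1) (m : ℕ) :
    ∃ N, ∀ i, maxdd C Dfun ξ m i ≤ FS C Dfun ξ N i := by
  induction m with
  | zero => exact dd_le_FS (wfun_le ξ 0) hξ
  | succ m ihm =>
    obtain ⟨N1, hN1⟩ := ihm
    obtain ⟨N2, hN2⟩ := dd_le_FS (C := C) (Dfun := Dfun) (wfun_le ξ (m + 1)) hξ
    refine ⟨max N1 N2, fun i => ?_⟩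
    rw [maxdd, Pi.sup_apply]
    exact max_le (le_trans (hN1 i) (FS_le_FS (le_max_left _ _) i))
      (le_trans (hN2 i) (FS_le_FS (le_max_right _ _) i))

include hCP hmax hDP hP1 in
theorem exceed_infinite {ξ : Ordinal.{u}} (hξ : ξ < w1) (m : ℕ) :
    {i : ℕ | maxdd C Dfun ξ m i < cF C Dfun ξ i}.Infinite := by
  obtain ⟨N, hN⟩ := maxdd_le_FS hCP hmax hDP hP1 hξ m
  have h2 := (cF_spec hCP hmax hDP hP1 ξ hξ).2 N
  rw [leStar] at h2
  apply Set.Infinite.mono (s := {i : ℕ | ¬ cF C Dfun ξ i ≤ FS C Dfun ξ N i})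
    (fun i hi => by
      simp only [Set.mem_setOf_eq, not_le] at *
      exact lt_of_le_of_lt (hN i) hi) h2

include hCP hmax hDP hP1 in
theorem idx_spec {ξ : Ordinal.{u}} (hξ : ξ < w1) :
    (∀ n, maxdd C Dfun ξ n (idx C Dfun ξ n) < cF C Dfun ξ (idx C Dfun ξ n)) ∧
    (∀ n, idx C Dfun ξ n < idx C Dfun ξ (n + 1)) := by
  have hstep : ∀ n, idx C Dfun ξ n < idx C Dfun ξ (n + 1) ∧
      maxdd C Dfun ξ (n + 1) (idx C Dfun ξ (n + 1)) < cF C Dfun ξ (idx C Dfun ξ (n + 1)) := by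
    intro n
    have hex : ∃ i, idx C Dfun ξ n < i ∧ maxdd C Dfun ξ (n + 1) i < cF C Dfun ξ i := by
      obtain ⟨i, hi, hgt⟩ := infinite_gt (exceed_infinite hCP hmax hDP hP1 hξ (n + 1))
        (idx C Dfun ξ n)
      exact ⟨i, hgt, hi⟩
    rw [idx, dif_pos hex]
    exact ⟨(Nat.find_spec hex).1, (Nat.find_spec hex).2⟩
  refine ⟨fun n => ?_, fun n => (hstep n).1⟩
  cases n with
  | zero =>
    have hex : ∃ i, maxdd C Dfun ξ 0 i < cF C Dfun ξ i :=
      (exceed_infinite hCP hmax hDP hP1 hξ 0).nonempty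
    rw [idx, dif_pos hex]
    exact Nat.find_spec hex
  | succ n => exact (hstep n).2

include hCP hmax hDP hP1 in
theorem SS_infinite {ξ : Ordinal.{u}} (hξ : ξ < w1) : (SS C Dfun ξ).Infinite := by
  apply Set.infinite_range_of_injective
  have hmono : StrictMono (idx C Dfun ξ) :=
    strictMono_nat_of_lt_succ (idx_spec hCP hmax hDP hP1 hξ).2
  intro a b hab
  exact hmono.injective (congrArg Prod.fst hab)

theorem SS_subset {ξ : Ordinal.{u}} : SS C Dfun ξ ⊆ Ifun (cF C Dfun ξ) := by
  rintro p ⟨n, rfl⟩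
  simp only [Ifun, Set.mem_setOf_eq]
  exact le_rfl

include hCP hmax hDP hP1 in
theorem SS_dd_finite {η ξ : Ordinal.{u}} (hηξ : η ≤ ξ) (hξ : ξ < w1) :
    (SS C Dfun ξ ∩ Ifun (dd C Dfun η)).Finite := by
  obtain ⟨m, hm⟩ := wfun_surj hξ η hηξ
  apply Set.Finite.subset (Set.Finite.image
    (fun n => (idx C Dfun ξ n, cF C Dfun ξ (idx C Dfun ξ n))) (Set.finite_Iio m))
  rintro p ⟨⟨n, rfl⟩, hp2⟩
  refine Set.mem_image_of_mem _ ?_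
  simp only [Set.mem_Iio]
  by_contra hge
  push_neg at hge
  have h1 : dd C Dfun η (idx C Dfun ξ n) ≤ maxdd C Dfun ξ n (idx C Dfun ξ n) := by
    rw [← hm]; exact dd_wfun_le_maxdd hge _
  have h2 := (idx_spec hCP hmax hDP hP1 hξ).1 n
  have h3 : cF C Dfun ξ (idx C Dfun ξ n) ≤ dd C Dfun η (idx C Dfun ξ n) := hp2
  omega

include hCP hmax hDP hP1 in
theorem cF_not_leStar_dd {η ξ : Ordinal.{u}} (hηξ : η ≤ ξ) (hξ : ξ < w1) :
    ¬ leStar (cF C Dfun ξ) (dd C Dfun η) := by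
  intro hle
  obtain ⟨N, hN⟩ := dd_le_FS (C := C) (Dfun := Dfun) hηξ hξ
  exact (cF_spec hCP hmax hDP hP1 ξ hξ).2 N (leStar_mono hle hN)

/-! ### rank -/

theorem rk_spec {f : ℕ → ℕ} (hfP : f ∈ P)
    (hDdom : ∀ f ∈ P, ∃ ξ : Ordinal.{u}, ξ < w1 ∧ leStar f (Dfun ξ)) :
    rk C Dfun f < w1 ∧ leStar f (dd C Dfun (rk C Dfun f)) := by
  obtain ⟨ξ, hξ, hle⟩ := hDdom f hfP
  have hmem : succ ξ ∈ {ζ : Ordinal.{u} | leStar f (dd C Dfun ζ)} := by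
    rw [Set.mem_setOf_eq, dd_succ]
    exact leStar_mono hle (fun i => by rw [Pi.sup_apply]; exact le_max_right _ _)
  have hne : {ζ : Ordinal.{u} | leStar f (dd C Dfun ζ)}.Nonempty := ⟨succ ξ, hmem⟩
  constructor
  · exact lt_of_le_of_lt (csInf_le' hmem)
      ((Cardinal.isSuccLimit_ord (le_of_lt aleph0_lt_aleph_one)).succ_lt hξ)
  · exact csInf_mem hne

include hCP hmax hDP hP1 in
theorem rk_cF {ξ : Ordinal.{u}} (hξ : ξ < w1) : rk C Dfun (cF C Dfun ξ) = succ ξ := by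
  have hmem : succ ξ ∈ {ζ : Ordinal.{u} | leStar (cF C Dfun ξ) (dd C Dfun ζ)} := by
    rw [Set.mem_setOf_eq, dd_succ]
    exact leStar_of_le (fun i => by rw [Pi.sup_apply]; exact le_max_left _ _)
  refine le_antisymm (csInf_le' hmem) ?_
  rw [succ_le_iff]
  by_contra hlt
  push_neg at hlt
  have hmem2 := csInf_mem ⟨succ ξ, hmem⟩
  exact cF_not_leStar_dd hCP hmax hDP hP1 hlt hξ hmem2

/-! ### the invariant -/

include hCP hmax hDP hP1 in
theorem Inv {G : Type*} [AddCommGroup G] (e : G) :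
    ∀ ξ : Ordinal.{u}, ξ < w1 → ∀ (ε : Ordinal.{u} → Bool) (η ζ : Ordinal.{u}), η ≤ ζ → ζ ≤ ξ →
      {p ∈ Ifun (dd C Dfun η) | FF e C Dfun ε ξ p ≠ FF e C Dfun ε ζ p}.Finite := by
  intro ξ
  induction ξ using Ordinal.induction with
  | h ξ ih =>
    intro hξ ε η ζ hηζ hζξ
    rcases Ordinal.zero_or_succ_or_isSuccLimit ξ with h0 | ⟨a, ha⟩ | hl
    · subst h0
      rw [nonpos_iff_eq_zero.mp hζξ]
      simp
    · subst ha
      rcases eq_or_lt_of_le hζξ with hζeq | hζlt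
      · subst hζeq; simp
      · have hζa : ζ ≤ a := lt_succ_iff.mp hζlt
        have haw : a < w1 := (lt_succ a).trans hξ
        have hstep : {p ∈ Ifun (dd C Dfun η) |
            FF e C Dfun ε (succ a) p ≠ FF e C Dfun ε a p}.Finite := by
          apply Set.Finite.subset (SS_dd_finite hCP hmax hDP hP1 (hηζ.trans hζa) haw)
          rintro p ⟨hp1, hp2⟩
          refine ⟨?_, hp1⟩
          by_contra hpS
          apply hp2
          rw [FF_succ_apply, if_neg (fun hand => hpS hand.2), add_zero]
        exact sep_ne_trans _ _ _ _ hstep (ih a (lt_succ a) haw ε η ζ hηζ hζa)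
    · rcases eq_or_lt_of_le hζξ with hζeq | hζlt
      · subst hζeq; simp
      · have hηl : η < ξ := lt_of_le_of_lt hηζ hζlt
        obtain ⟨m1, hm1⟩ := ladder_surj hl hξ η hηl
        obtain ⟨m2, hm2⟩ := ladder_surj hl hξ ζ hζlt
        set m := max m1 m2 with hmdef
        set ξm := maxO (ladder ξ) m with hξmdef
        have hξmlt : ξm < ξ := maxO_lt (ladder_lt hl) m
        have hξmw1 : ξm < w1 := hξmlt.trans hξ
        have hζξm : ζ ≤ ξm := by
          rw [← hm2]; exact le_maxO (le_max_right m1 m2)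
        have hηξm : η ≤ ξm := hηζ.trans hζξm
        have hBad1 : ∀ k ≤ m, {p ∈ Ifun (dd C Dfun (ladder ξ k)) |
            FF e C Dfun ε ξm p ≠ FF e C Dfun ε (maxO (ladder ξ) k) p}.Finite := by
          intro k hk
          exact ih ξm hξmlt hξmw1 ε (ladder ξ k) (maxO (ladder ξ) k)
            (le_maxO le_rfl) (maxO_mono hk)
        have hBad2 : {p ∈ Ifun (dd C Dfun η) |
            FF e C Dfun ε ξm p ≠ FF e C Dfun ε ζ p}.Finite :=
          ih ξm hξmlt hξmw1 ε η ζ hηζ hζξm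
        have hfin : ((⋃ k ∈ Set.Iic m, {p ∈ Ifun (dd C Dfun (ladder ξ k)) |
            FF e C Dfun ε ξm p ≠ FF e C Dfun ε (maxO (ladder ξ) k) p}) ∪
            {p ∈ Ifun (dd C Dfun η) | FF e C Dfun ε ξm p ≠ FF e C Dfun ε ζ p}).Finite :=
          Set.Finite.union
            (Set.Finite.biUnion (Set.finite_Iic m) (fun k hk => hBad1 k hk)) hBad2
        apply Set.Finite.subset hfin
        rintro p ⟨hp1, hp2⟩
        have hex : ∃ n, p ∈ Ifun (dd C Dfun (ladder ξ n)) := ⟨m1, by rw [hm1]; exact hp1⟩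
        have hnsel : nsel C Dfun (ladder ξ) p = Nat.find hex := by
          rw [nsel, dif_pos hex]
        have hkle : nsel C Dfun (ladder ξ) p ≤ m := by
          rw [hnsel]
          exact le_trans (Nat.find_min' hex (by rw [hm1]; exact hp1)) (le_max_left m1 m2)
        have hkmem : p ∈ Ifun (dd C Dfun (ladder ξ (nsel C Dfun (ladder ξ) p))) := by
          rw [hnsel]; exact Nat.find_spec hex
        have h1 : FF e C Dfun ε ξ p =
            FF e C Dfun ε (maxO (ladder ξ) (nsel C Dfun (ladder ξ) p)) p := by
          rw [FF_limit e C Dfun ε hl]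
        by_cases hc : FF e C Dfun ε ξm p = FF e C Dfun ε ζ p
        · left
          refine Set.mem_biUnion (Set.mem_Iic.mpr hkle) ⟨hkmem, fun heq => ?_⟩
          exact hp2 (h1.trans (heq.symm.trans hc))
        · right
          exact ⟨hp1, hc⟩
end Props

/-! ### the pigeonhole lemma and final assembly -/

universe v w

theorem stmt8' {G : Type v} [AddCommGroup G] [Nontrivial G]
    (hca : (2 : Cardinal.{w}) ^ aleph0 < 2 ^ aleph 1)
    (P : Set (ℕ → ℕ)) (hmax : ∀ f ∈ P, ∀ g ∈ P, f ⊔ g ∈ P)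
    (hcof₁ : ∃ D ⊆ P, (∀ f ∈ P, ∃ g ∈ D, leStar f g) ∧ #D = aleph 1)
    (C : Set (ℕ → ℕ)) (hCP : C ⊆ P)
    (σ : (aleph 1 : Cardinal.{u}).ord.ToType → ℕ → ℕ) (hσrange : Set.range σ = C)
    (hσmono : ∀ a b : (aleph 1 : Cardinal.{u}).ord.ToType, a ≤ b → leStar (σ a) (σ b))
    (hCunb : ¬ ∃ b ∈ P, ∀ f ∈ C, leStar f b) :
    ∃ φ : (ℕ → ℕ) → ℕ × ℕ → G,
      (∀ f ∈ P, ∀ g ∈ P, {p ∈ Ifun f ∩ Ifun g | φ f p ≠ φ g p}.Finite) ∧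
      ¬ ∃ ψ : ℕ × ℕ → G, ∀ f ∈ C, {p ∈ Ifun f | ψ p ≠ φ f p}.Finite := by
  classical
  obtain ⟨e, he⟩ := exists_ne (0 : G)
  obtain ⟨D, hDsub, hDdom0, hDcard⟩ := hcof₁
  set iso := Ordinal.ToType.mk (o := (aleph 1 : Cardinal.{u}).ord) with hisodef
  have hmkO : Cardinal.lift.{0} #((aleph 1 : Cardinal.{u}).ord.ToType) =
      Cardinal.lift.{u} #D := by
    rw [Cardinal.mk_toType, Cardinal.card_ord, hDcard, Cardinal.lift_aleph, Cardinal.lift_aleph]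
    norm_num
  obtain ⟨eD⟩ := Cardinal.lift_mk_eq'.mp hmkO
  set Dfun : Ordinal.{u} → ℕ → ℕ :=
    fun ξ => if h : ξ < w1 then ((eD (iso ⟨ξ, h⟩)) : ℕ → ℕ) else (fun _ => 0) with hDfundef
  have hDP : ∀ ξ : Ordinal.{u}, ξ < w1 → Dfun ξ ∈ P := by
    intro ξ h
    rw [hDfundef]
    dsimp only
    rw [dif_pos h]
    exact hDsub (eD (iso ⟨ξ, h⟩)).2
  have hDdom : ∀ f ∈ P, ∃ ξ : Ordinal.{u}, ξ < w1 ∧ leStar f (Dfun ξ) := by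
    intro f hf
    obtain ⟨g, hgD, hfg⟩ := hDdom0 f hf
    refine ⟨(iso.symm (eD.symm ⟨g, hgD⟩)).1, Set.mem_Iio.mp (iso.symm (eD.symm ⟨g, hgD⟩)).2, ?_⟩
    have hDv : Dfun (iso.symm (eD.symm ⟨g, hgD⟩)).1 = g := by
      rw [hDfundef]
      dsimp only
      rw [dif_pos (Set.mem_Iio.mp (iso.symm (eD.symm ⟨g, hgD⟩)).2)]
      rw [show (⟨_, Set.mem_Iio.mp (iso.symm (eD.symm ⟨g, hgD⟩)).2⟩ : Set.Iio w1) =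
          iso.symm (eD.symm ⟨g, hgD⟩) from Subtype.coe_eta _ _,
        OrderIso.apply_symm_apply, Equiv.apply_symm_apply]
    rw [hDv]
    exact hfg
  have hP1 : ∀ t : ℕ → ℕ → ℕ, (∀ n, t n ∈ P) → ∃ x, x ∈ C ∧ ∀ n, ¬ leStar x (t n) := by
    intro t ht
    by_contra hno
    push_neg at hno
    by_cases hall : ∃ n, ∀ a : (aleph 1 : Cardinal.{u}).ord.ToType, leStar (σ a) (t n)
    · obtain ⟨n, hn⟩ := hall
      refine hCunb ⟨t n, ht n, fun f hf => ?_⟩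
      rw [← hσrange] at hf
      obtain ⟨a, rfl⟩ := hf
      exact hn a
    · push_neg at hall
      choose g hg using hall
      have hsup : (⨆ n, ((iso.symm (g n) : Set.Iio w1) : Ordinal.{u})) < w1 := by
        apply Ordinal.iSup_lt_ord_lift _ (fun n => Set.mem_Iio.mp (iso.symm (g n)).2)
        rw [Cardinal.isRegular_aleph_one.cof_eq]
        simp only [Cardinal.mk_nat, Cardinal.lift_aleph0]
        exact aleph0_lt_aleph_one
      obtain ⟨n, hn⟩ := hno (σ (iso ⟨_, hsup⟩)) (by rw [← hσrange]; exact Set.mem_range_self _)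
      apply hg n
      apply leStar_trans _ hn
      apply hσmono
      have hle : iso.symm (g n) ≤ (⟨_, hsup⟩ : Set.Iio w1) := by
        rw [← Subtype.coe_le_coe]
        exact Ordinal.le_iSup (fun n => ((iso.symm (g n) : Set.Iio w1) : Ordinal.{u})) n
      calc g n = iso (iso.symm (g n)) := (iso.apply_symm_apply _).symm
        _ ≤ iso ⟨_, hsup⟩ := iso.monotone hle
  set εof : Set ((aleph 1 : Cardinal.{u}).ord.ToType) → Ordinal.{u} → Bool :=
    fun b ξ => if h : ξ < w1 then (if iso ⟨ξ, h⟩ ∈ b then true else false) else false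
    with hεofdef
  set Φ : Set ((aleph 1 : Cardinal.{u}).ord.ToType) → (ℕ → ℕ) → ℕ × ℕ → G :=
    fun b f => FF e C Dfun (εof b) (rk C Dfun f) with hΦdef
  have hcohAux : ∀ b, ∀ f ∈ P, ∀ g ∈ P, rk C Dfun f ≤ rk C Dfun g →
      {p ∈ Ifun f ∩ Ifun g | Φ b f p ≠ Φ b g p}.Finite := by
    intro b f hf g hg hle
    obtain ⟨hrf, hrfle⟩ := rk_spec (P := P) hf hDdom
    obtain ⟨hrg, _⟩ := rk_spec (P := P) hg hDdom
    have hfin1 : (Ifun f \ Ifun (dd C Dfun (rk C Dfun f))).Finite := Ifun_diff_finite hrfle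
    have hfin2 := Inv hCP hmax hDP hP1 e (rk C Dfun g) hrg (εof b)
      (rk C Dfun f) (rk C Dfun f) le_rfl hle
    apply Set.Finite.subset (hfin1.union hfin2)
    rintro p ⟨⟨hpf, hpg⟩, hpne⟩
    by_cases hpd : p ∈ Ifun (dd C Dfun (rk C Dfun f))
    · right
      exact ⟨hpd, fun heq => hpne heq.symm⟩
    · left
      exact ⟨hpf, hpd⟩
  have hcoh : ∀ b, ∀ f ∈ P, ∀ g ∈ P, {p ∈ Ifun f ∩ Ifun g | Φ b f p ≠ Φ b g p}.Finite := by
    intro b f hf g hg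
    rcases le_total (rk C Dfun f) (rk C Dfun g) with h | h
    · exact hcohAux b f hf g hg h
    · apply Set.Finite.subset (hcohAux b g hg f hf h)
      rintro p ⟨⟨h1, h2⟩, h3⟩
      exact ⟨⟨h2, h1⟩, fun x => h3 x.symm⟩
  have hnontriv : ∃ b, ¬ ∃ ψ : ℕ × ℕ → G, ∀ f ∈ C, {p ∈ Ifun f | ψ p ≠ Φ b f p}.Finite := by
    by_contra hcon
    push_neg at hcon
    choose Ψ hΨ using hcon
    obtain ⟨inj, hinj⟩ := exists_injective_nat (AddSubgroup.zmultiples e)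
    set Θ : Set ((aleph 1 : Cardinal.{u}).ord.ToType) → ℕ × ℕ → Option ℕ := fun b p =>
      if h : Ψ b p ∈ AddSubgroup.zmultiples e then some (inj ⟨Ψ b p, h⟩) else none with hΘdef
    have hΘinj : Function.Injective Θ := by
      intro b b' hbb'
      by_contra hne
      have hTne : {ξ : Ordinal.{u} | ξ < w1 ∧ εof b ξ ≠ εof b' ξ}.Nonempty := by
        have hx : ∃ x, ¬ (x ∈ b ↔ x ∈ b') := by
          by_contra hh
          push_neg at hh
          exact hne (Set.ext hh)
        obtain ⟨x, hx⟩ := hx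
        refine ⟨(iso.symm x).1, Set.mem_Iio.mp (iso.symm x).2, ?_⟩
        rw [hεofdef]
        dsimp only
        rw [dif_pos (Set.mem_Iio.mp (iso.symm x).2), dif_pos (Set.mem_Iio.mp (iso.symm x).2),
          show (⟨_, Set.mem_Iio.mp (iso.symm x).2⟩ : Set.Iio w1) = iso.symm x from
            Subtype.coe_eta _ _, OrderIso.apply_symm_apply]
        by_cases hxb : x ∈ b <;> by_cases hxb' : x ∈ b'
        · exact absurd (iff_of_true hxb hxb') hx
        · simp [hxb, hxb']
        · simp [hxb, hxb']
        · exact absurd (iff_of_false hxb hxb') hx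
      set ξ0 := sInf {ξ : Ordinal.{u} | ξ < w1 ∧ εof b ξ ≠ εof b' ξ} with hξ0def
      have hξ0 := csInf_mem hTne
      have hpre : ∀ ζ < ξ0, εof b ζ = εof b' ζ := by
        intro ζ hζ
        by_contra hnee
        have hζw : ζ < w1 := hζ.trans hξ0.1
        exact absurd (csInf_le' (show ζ ∈ {ξ : Ordinal.{u} | ξ < w1 ∧ εof b ξ ≠ εof b' ξ}
          from ⟨hζw, hnee⟩)) (not_le_of_gt hζ)
      have hFFeq : FF e C Dfun (εof b) ξ0 = FF e C Dfun (εof b') ξ0 :=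
        FF_prefix e C Dfun ξ0 _ _ hpre
      have hcC : cF C Dfun ξ0 ∈ C := (cF_spec hCP hmax hDP hP1 ξ0 hξ0.1).1
      have hrkc : rk C Dfun (cF C Dfun ξ0) = succ ξ0 := rk_cF hCP hmax hDP hP1 hξ0.1
      have hdiff : ∀ p ∈ SS C Dfun ξ0, Φ b (cF C Dfun ξ0) p ≠ Φ b' (cF C Dfun ξ0) p := by
        intro p hp
        rw [hΦdef]
        dsimp only
        rw [hrkc, FF_succ_apply, FF_succ_apply, hFFeq]
        intro heq
        have heq2 := add_left_cancel heq
        by_cases h1 : εof b ξ0 = true <;> by_cases h2 : εof b' ξ0 = true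
        · exact hξ0.2 (h1.trans h2.symm)
        · rw [if_pos ⟨h1, hp⟩, if_neg (fun hand => h2 hand.1)] at heq2
          exact he heq2
        · rw [if_neg (fun hand => h1 hand.1), if_pos ⟨h2, hp⟩] at heq2
          exact he heq2.symm
        · rw [Bool.not_eq_true] at h1 h2
          exact hξ0.2 (h1.trans h2.symm)
      have hfb := hΨ b _ hcC
      have hfb' := hΨ b' _ hcC
      have hsub : SS C Dfun ξ0 ⊆ {p ∈ Ifun (cF C Dfun ξ0) | Ψ b p ≠ Φ b (cF C Dfun ξ0) p} ∪
          {p ∈ Ifun (cF C Dfun ξ0) | Ψ b' p ≠ Φ b' (cF C Dfun ξ0) p} := by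
        intro p hp
        have hpIc : p ∈ Ifun (cF C Dfun ξ0) := SS_subset hp
        by_contra hnmem
        simp only [Set.mem_union, Set.mem_setOf_eq, not_or, not_and, not_not] at hnmem
        have e1 : Ψ b p = Φ b (cF C Dfun ξ0) p := hnmem.1 hpIc
        have e2 : Ψ b' p = Φ b' (cF C Dfun ξ0) p := hnmem.2 hpIc
        have hmem1 : Ψ b p ∈ AddSubgroup.zmultiples e := by
          rw [e1, hΦdef]
          exact FF_mem e C Dfun (εof b) _ p
        have hmem2 : Ψ b' p ∈ AddSubgroup.zmultiples e := by
          rw [e2, hΦdef]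
          exact FF_mem e C Dfun (εof b') _ p
        have hcf := congrFun hbb' p
        rw [hΘdef] at hcf
        dsimp only at hcf
        rw [dif_pos hmem1, dif_pos hmem2] at hcf
        have := hinj (Option.some_injective _ hcf)
        have hΨeq : Ψ b p = Ψ b' p := congrArg Subtype.val this
        exact hdiff p hp (by rw [← e1, ← e2]; exact hΨeq)
      exact (SS_infinite hCP hmax hDP hP1 hξ0.1) (Set.Finite.subset (hfb.union hfb') hsub)
    have hcard1 : Cardinal.lift.{0} #(Set ((aleph 1 : Cardinal.{u}).ord.ToType)) ≤
        Cardinal.lift.{u} #(ℕ × ℕ → Option ℕ) :=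
      Cardinal.lift_mk_le'.mpr ⟨⟨Θ, hΘinj⟩⟩
    have h2 : #(Set ((aleph 1 : Cardinal.{u}).ord.ToType)) =
        (2 : Cardinal.{u}) ^ (aleph 1 : Cardinal.{u}) := by
      rw [Cardinal.mk_set, Cardinal.mk_toType, Cardinal.card_ord]
    have h3 : #(ℕ × ℕ → Option ℕ) ≤ (2 : Cardinal.{0}) ^ (aleph0 : Cardinal.{0}) := by
      rw [← Cardinal.power_def]
      calc #(Option ℕ) ^ #(ℕ × ℕ) ≤ aleph0 ^ #(ℕ × ℕ) := by
            apply Cardinal.power_le_power_right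
            simp [Cardinal.mk_option, Cardinal.mk_nat]
        _ = aleph0 ^ (aleph0 : Cardinal.{0}) := by
            congr 1
            simp [Cardinal.mk_prod, Cardinal.mk_nat]
        _ = 2 ^ (aleph0 : Cardinal.{0}) := Cardinal.power_self_eq le_rfl
    have hfinal : (2 : Cardinal.{u}) ^ (aleph 1 : Cardinal.{u}) ≤
        (2 : Cardinal.{u}) ^ (aleph0 : Cardinal.{u}) := by
      have hu : Cardinal.lift.{0} ((2 : Cardinal.{u}) ^ (aleph 1 : Cardinal.{u})) ≤
          Cardinal.lift.{u} ((2 : Cardinal.{0}) ^ (aleph0 : Cardinal.{0})) := by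
        rw [← h2]
        exact le_trans hcard1 (Cardinal.lift_le.mpr h3)
      simp only [Cardinal.lift_power, Cardinal.lift_ofNat, Cardinal.lift_aleph0,
        Cardinal.lift_aleph, Cardinal.lift_uzero, Ordinal.lift_one] at hu
      exact hu
    have hca' : (2 : Cardinal.{max u w}) ^ (aleph0 : Cardinal.{max u w}) <
        2 ^ (aleph 1 : Cardinal.{max u w}) := by
      have := Cardinal.lift_lt.{w, u}.mpr hca
      simpa only [Cardinal.lift_power, Cardinal.lift_ofNat, Cardinal.lift_aleph0,
        Cardinal.lift_aleph, Ordinal.lift_one] using this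
    have hfinal' : (2 : Cardinal.{max u w}) ^ (aleph 1 : Cardinal.{max u w}) ≤
        2 ^ (aleph0 : Cardinal.{max u w}) := by
      have := Cardinal.lift_le.{w, u}.mpr hfinal
      simpa only [Cardinal.lift_power, Cardinal.lift_ofNat, Cardinal.lift_aleph0,
        Cardinal.lift_aleph, Ordinal.lift_one] using this
    exact absurd (lt_of_lt_of_le hca' hfinal') (lt_irrefl _)
  obtain ⟨b, hb⟩ := hnontriv
  exact ⟨Φ b, hcoh b, hb⟩

end
end Stmt8

/-- base case lemma: assuming 2^ℵ₀ < 2^ℵ₁, if P ⊆ (ω^ω, ≤*) is ∨-closed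
with cofinality ℵ₁ and contains an ω₁-chain C unbounded in P, and G is a nontrivial
abelian group, then there is a coherent family on P whose restriction to C is
nontrivial. -/
theorem stmt8 {G : Type*} [AddCommGroup G] [Nontrivial G]
    (hca : (2 : Cardinal) ^ aleph0 < 2 ^ aleph 1)
    (P : Set (ℕ → ℕ)) (hmax : ∀ f ∈ P, ∀ g ∈ P, f ⊔ g ∈ P)
    (hcof₁ : ∃ D ⊆ P, (∀ f ∈ P, ∃ g ∈ D, leStar f g) ∧ #D = aleph 1)
    (hcof₂ : ∀ D ⊆ P, (∀ f ∈ P, ∃ g ∈ D, leStar f g) → aleph 1 ≤ #D)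
    (C : Set (ℕ → ℕ)) (hCP : C ⊆ P)
    (σ : (aleph 1).ord.ToType → ℕ → ℕ) (hσrange : Set.range σ = C)
    (hσmono : ∀ a b : (aleph 1).ord.ToType, a ≤ b → leStar (σ a) (σ b))
    (hσinj : Function.Injective σ)
    (hCunb : ¬ ∃ b ∈ P, ∀ f ∈ C, leStar f b) :
    ∃ φ : (ℕ → ℕ) → ℕ × ℕ → G,
      (∀ f ∈ P, ∀ g ∈ P, {p ∈ Ifun f ∩ Ifun g | φ f p ≠ φ g p}.Finite) ∧
      ¬ ∃ ψ : ℕ × ℕ → G, ∀ f ∈ C, {p ∈ Ifun f | ψ p ≠ φ f p}.Finite :=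
  Stmt8.stmt8' hca P hmax hcof₁ C hCP σ hσrange hσmono hCunb
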